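/- Let G be a group and let ν: G → ℝ be a nonnegative function satisfying ν(gh) ≤ ν(g) + ν(h) for all g, h ∈ G. Suppose (ψ_i)_{i∈ℕ} is a sequence of group homomorphisms ψ_i: (ℝ,+) → G whose images pairwise commute, and suppose there are constants M₂ ≥ 0 with ν(ψ_i(t)) ≤ M₂·|t| for all i and all t ∈ ℝ. Suppose further that φ: G → ℝ is a homogeneous quasi-morphism, A > 0 is a constant with |φ(g)| ≤ A·ν(g) for all g ∈ G, and there is M₁ > 0 with φ(ψ_i(1)) ≥ M₁ for every i (in particular the numbers φ(ψ_i(1)) all have the same sign). Then for every k ∈ ℕ and all v₁, …, v_k ≥ 0: (M₁/A)·(v₁ + … + v_k) ≤ ν(ψ₁(v₁)·ψ₂(v₂)·…·ψ_k(v_k)) ≤ M₂·(v₁ + … + v_k). -/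

import Mathlib

private lemma qm_add_of_commute {G : Type*} [Group G] (φ : G → ℝ)
    (hqm : ∃ K : ℝ, ∀ a b : G, |φ (a * b) - φ a - φ b| ≤ K)
    (hhom : ∀ (a : G) (m : ℤ), φ (a ^ m) = (m : ℝ) * φ a)
    (a b : G) (hab : a * b = b * a) : φ (a * b) = φ a + φ b := by
  obtain ⟨K, hK⟩ := hqm
  have hc : Commute a b := hab
  have hn : ∀ (c : G) (n : ℕ), φ (c ^ n) = (n : ℝ) * φ c := by
    intro c n
    have := hhom c (n : ℤ)
    simpa [zpow_natCast] using this
  have key : ∀ n : ℕ, |(n:ℝ) * (φ (a*b) - φ a - φ b)| ≤ K := by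
    intro n
    have h1 : (a*b)^n = a^n * b^n := hc.mul_pow n
    have h := hK (a^n) (b^n)
    rw [← h1, hn (a*b) n, hn a n, hn b n] at h
    calc |(n:ℝ) * (φ (a*b) - φ a - φ b)|
        = |(n:ℝ)*φ (a*b) - (n:ℝ)*φ a - (n:ℝ)*φ b| := by congr 1; ring
      _ ≤ K := h
  have hz : φ (a*b) - φ a - φ b = 0 := by
    by_contra h
    have hx : 0 < |φ (a*b) - φ a - φ b| := abs_pos.mpr h
    obtain ⟨n, hnK⟩ := exists_nat_gt (K / |φ (a*b) - φ a - φ b|)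
    have h2 := key n
    rw [abs_mul, Nat.abs_cast] at h2
    have h3 : (n:ℝ) ≤ K / |φ (a*b) - φ a - φ b| := by
      rw [le_div_iff₀ hx]; exact h2
    linarith
  linarith

private lemma phi_prod_sum {G : Type*} [Group G] (φ : G → ℝ)
    (hadd : ∀ a b : G, a*b=b*a → φ (a*b) = φ a + φ b) (h1 : φ 1 = 0) :
    ∀ (k : ℕ) (ψ : ℕ → ℝ → G) (v : Fin k → ℝ),
      (∀ (i j : ℕ) (s t : ℝ), ψ i s * ψ j t = ψ j t * ψ i s) →
      φ (List.ofFn fun i : Fin k => ψ i (v i)).prod = ∑ i : Fin k, φ (ψ (i : ℕ) (v i)) := by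
  intro k
  induction k with
  | zero => intro ψ v _; simp [h1]
  | succ k ih =>
    intro ψ v hcomm
    rw [List.ofFn_succ, List.prod_cons]
    have htail : (List.ofFn fun i : Fin k => ψ (i.succ : Fin (k+1)) (v i.succ))
        = List.ofFn fun i : Fin k => (fun n => ψ (n+1)) (i : ℕ) ((fun i : Fin k => v i.succ) i) := by
      rfl
    have hcomm' : Commute (ψ (0 : Fin (k+1)) (v 0))
        (List.ofFn fun i : Fin k => ψ (i.succ : Fin (k+1)) (v i.succ)).prod := by
      apply Commute.list_prod_right
      intro x hx
      rw [List.mem_ofFn] at hx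
      obtain ⟨i, rfl⟩ := hx
      exact (hcomm _ _ _ _).symm
    rw [hadd _ _ hcomm'.eq, htail,
      ih (fun n => ψ (n+1)) (fun i => v i.succ) (fun i j s t => hcomm _ _ _ _),
      Fin.sum_univ_succ]
    simp [Fin.val_succ]

private lemma nu_prod_le {G : Type*} [Group G] (ν : G → ℝ)
    (hsub : ∀ g h : G, ν (g * h) ≤ ν g + ν h) (h1 : ν 1 = 0) :
    ∀ l : List G, ν l.prod ≤ (l.map ν).sum := by
  intro l; induction l with
  | nil => simp [h1]
  | cons a l ih =>
    simp only [List.prod_cons, List.map_cons, List.sum_cons]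
    exact (hsub a l.prod).trans (by linarith)

/-- Bi-Lipschitz embedding of the semigroup `ℝ^∞₊`: let `ν : G → ℝ` be a nonnegative
subadditive function, `(ψᵢ)_{i∈ℕ}` a sequence of homomorphisms `(ℝ,+) → G` with pairwise
commuting images and `ν(ψᵢ(t)) ≤ M₂·|t|`, and `φ : G → ℝ` a homogeneous quasi-morphism
with `|φ(g)| ≤ A·ν(g)` and `φ(ψᵢ(1)) ≥ M₁ > 0` for all `i`.  Then for every `k` and all
`v₁, …, v_k ≥ 0`,
`(M₁/A)·(v₁+⋯+v_k) ≤ ν(ψ₁(v₁)⋯ψ_k(v_k)) ≤ M₂·(v₁+⋯+v_k)`. -/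
theorem biLipschitz_embedding_of_Rinfty_pos
    {G : Type*} [Group G] (ν : G → ℝ)
    (hν0 : ∀ g : G, 0 ≤ ν g)
    (hsub : ∀ g h : G, ν (g * h) ≤ ν g + ν h)
    (ψ : ℕ → ℝ → G)
    (hψ : ∀ (i : ℕ) (s t : ℝ), ψ i (s + t) = ψ i s * ψ i t)
    (hcomm : ∀ (i j : ℕ) (s t : ℝ), ψ i s * ψ j t = ψ j t * ψ i s)
    (M₂ : ℝ) (hM₂ : 0 ≤ M₂)
    (hψν : ∀ (i : ℕ) (t : ℝ), ν (ψ i t) ≤ M₂ * |t|)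
    (φ : G → ℝ)
    (hqm : ∃ K : ℝ, ∀ a b : G, |φ (a * b) - φ a - φ b| ≤ K)
    (hhom : ∀ (a : G) (m : ℤ), φ (a ^ m) = (m : ℝ) * φ a)
    (A : ℝ) (hA : 0 < A)
    (hφν : ∀ g : G, |φ g| ≤ A * ν g)
    (M₁ : ℝ) (hM₁ : 0 < M₁)
    (hφψ : ∀ i : ℕ, M₁ ≤ φ (ψ i 1)) :
    ∀ (k : ℕ) (v : Fin k → ℝ), (∀ i, 0 ≤ v i) →
      M₁ / A * (∑ i, v i) ≤ ν (List.ofFn fun i : Fin k => ψ i (v i)).prod ∧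
        ν (List.ofFn fun i : Fin k => ψ i (v i)).prod ≤ M₂ * ∑ i, v i := by
  -- basic facts
  have hadd := qm_add_of_commute φ hqm hhom
  have hφ1 : φ 1 = 0 := by have := hhom 1 0; simpa using this
  have hψ0 : ∀ i : ℕ, ψ i 0 = 1 := by
    intro i
    have h := hψ i 0 0
    rw [add_zero] at h
    exact (left_eq_mul.mp h)
  have hν1 : ν 1 = 0 := by
    have h := hψν 0 0
    rw [hψ0 0] at h
    simp at h
    exact le_antisymm h (hν0 1)
  -- linearity of φ ∘ ψ i
  have hlin : ∀ (i : ℕ) (t : ℝ), φ (ψ i t) = t * φ (ψ i 1) := by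
    intro i t
    have hadd_f : ∀ s t : ℝ, φ (ψ i (s + t)) = φ (ψ i s) + φ (ψ i t) := by
      intro s t
      rw [hψ i s t]
      exact hadd _ _ (hcomm i i s t)
    set f : ℝ →+ ℝ := AddMonoidHom.mk' (fun t => φ (ψ i t))
      (fun s t => hadd_f s t) with hf
    have f_eq : ∀ s, f s = φ (ψ i s) := fun s => rfl
    have hq : ∀ q : ℚ, f (q : ℝ) = (q : ℝ) * f 1 := by
      intro q
      have := map_ratCast_smul f ℝ ℝ q (1 : ℝ)
      simpa [smul_eq_mul] using this
    set c := φ (ψ i 1) with hc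
    have hb : ∀ s : ℝ, |φ (ψ i s)| ≤ A * M₂ * |s| := by
      intro s
      have h1 := hφν (ψ i s)
      have h2 := hψν i s
      nlinarith [abs_nonneg s]
    have key : ∀ ε : ℝ, 0 < ε → |φ (ψ i t) - t * c| ≤ (A * M₂ + |c| + 1) * ε := by
      intro ε hε
      obtain ⟨q, hqd⟩ := exists_rat_near t hε
      have e1 : φ (ψ i t) - φ (ψ i (q : ℝ)) = φ (ψ i (t - (q : ℝ))) := by
        rw [← f_eq, ← f_eq, ← f_eq]
        exact (map_sub f t q).symm
      have e3 : φ (ψ i (q : ℝ)) = (q : ℝ) * c := by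
        have := hq q
        rw [f_eq] at this
        rw [this]; rfl
      have e2 : φ (ψ i t) - t * c = φ (ψ i (t - (q : ℝ))) + ((q : ℝ) - t) * c := by
        rw [← e1, e3]; ring
      rw [e2]
      have h3 := hb (t - (q : ℝ))
      have h4 : |((q : ℝ) - t) * c| ≤ ε * |c| := by
        rw [abs_mul]
        have : |(q : ℝ) - t| = |t - (q : ℝ)| := abs_sub_comm _ _
        nlinarith [abs_nonneg c, hqd.le, this]
      calc |φ (ψ i (t - (q : ℝ))) + ((q : ℝ) - t) * c|
          ≤ |φ (ψ i (t - (q : ℝ)))| + |((q : ℝ) - t) * c| := abs_add_le _ _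
        _ ≤ A * M₂ * |t - (q : ℝ)| + ε * |c| := by linarith
        _ ≤ (A * M₂ + |c| + 1) * ε := by nlinarith [hqd.le, abs_nonneg (t - (q:ℝ)), hA.le, hM₂, mul_nonneg hA.le hM₂, abs_nonneg c]
    have hz : φ (ψ i t) - t * c = 0 := by
      by_contra h
      have hx : 0 < |φ (ψ i t) - t * c| := abs_pos.mpr h
      have hC : 0 < A * M₂ + |c| + 1 := by positivity
      have := key (|φ (ψ i t) - t * c| / (2 * (A * M₂ + |c| + 1)))
        (by positivity)
      have h2 : (A * M₂ + |c| + 1) * (|φ (ψ i t) - t * c| / (2 * (A * M₂ + |c| + 1)))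
          = |φ (ψ i t) - t * c| / 2 := by
        field_simp
      rw [h2] at this
      linarith
    linarith
  intro k v hv
  set P := (List.ofFn fun i : Fin k => ψ i (v i)).prod with hP
  have hsum : φ P = ∑ i : Fin k, φ (ψ (i : ℕ) (v i)) :=
    phi_prod_sum φ hadd hφ1 k ψ v hcomm
  constructor
  · -- lower bound
    have h1 : M₁ * ∑ i, v i ≤ φ P := by
      rw [hsum]
      rw [Finset.mul_sum]
      apply Finset.sum_le_sum
      intro i _
      rw [hlin]
      calc M₁ * v i ≤ φ (ψ (i : ℕ) 1) * v i :=
            mul_le_mul_of_nonneg_right (hφψ i) (hv i)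
        _ = v i * φ (ψ (i : ℕ) 1) := mul_comm _ _
    have h2 : φ P ≤ A * ν P := (le_abs_self _).trans (hφν P)
    rw [div_mul_eq_mul_div, div_le_iff₀ hA]
    nlinarith
  · -- upper bound
    calc ν P ≤ ((List.ofFn fun i : Fin k => ψ i (v i)).map ν).sum :=
          nu_prod_le ν hsub hν1 _
      _ = ∑ i : Fin k, ν (ψ (i : ℕ) (v i)) := by
          rw [List.map_ofFn, List.sum_ofFn]; rfl
      _ ≤ ∑ i : Fin k, M₂ * v i := by
          apply Finset.sum_le_sum
          intro i _
          have := hψν i (v i)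
          rwa [abs_of_nonneg (hv i)] at this
      _ = M₂ * ∑ i, v i := (Finset.mul_sum _ _ _).symm
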